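/- The normalized lattice sums (1/log N) ∑_{x ∈ ℤ⁴, 0 < ‖x‖ ≤ N} ‖x‖^{−4} converge, as the integer N → ∞, to the positive limit 2π² (the surface area of the unit sphere in ℝ⁴), where ‖x‖ denotes the Euclidean norm. -/

import Mathlib

open MeasureTheory Filter Topology

/-- The Euclidean norm of a lattice point of `ℤ⁴`. -/
noncomputable def eNormZ (x : Fin 4 → ℤ) : ℝ := Real.sqrt (∑ i, ((x i : ℝ)) ^ 2)

noncomputable abbrev E4 := EuclideanSpace ℝ (Fin 4)

noncomputable def emb (x : Fin 4 → ℤ) : E4 := WithLp.toLp 2 (fun i => (x i : ℝ))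

lemma eNormZ_eq_norm (x : Fin 4 → ℤ) : eNormZ x = ‖emb x‖ := by
  rw [EuclideanSpace.norm_eq, eNormZ]
  congr 1
  refine Finset.sum_congr rfl fun i _ => ?_
  rw [Real.norm_eq_abs, sq_abs]; rfl

lemma eNormZ_nonneg (x : Fin 4 → ℤ) : 0 ≤ eNormZ x := Real.sqrt_nonneg _

lemma one_le_eNormZ {x : Fin 4 → ℤ} (hx : x ≠ 0) : 1 ≤ eNormZ x := by
  obtain ⟨i, hi⟩ := Function.ne_iff.1 hx
  have h1 : (1:ℤ) ≤ |x i| := Int.one_le_abs (by simpa using hi)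
  have h2 : (1:ℝ) ≤ ((x i : ℝ)) ^ 2 := by
    have habs : (1:ℝ) ≤ |(x i : ℝ)| := by exact_mod_cast h1
    rw [← sq_abs]
    nlinarith [abs_nonneg ((x i : ℝ))]
  have h3 : (1:ℝ) ≤ ∑ j, ((x j : ℝ)) ^ 2 :=
    le_trans h2 (Finset.single_le_sum (f := fun j => ((x j : ℝ)) ^ 2)
      (fun j _ => sq_nonneg _) (Finset.mem_univ i))
  calc (1:ℝ) = Real.sqrt 1 := (Real.sqrt_one).symm
  _ ≤ _ := Real.sqrt_le_sqrt h3

lemma finite_le (R : ℝ) : {x : Fin 4 → ℤ | eNormZ x ≤ R}.Finite := by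
  rcases le_or_gt 0 R with hR | hR
  · refine Set.Finite.subset (Set.finite_Icc (fun _ : Fin 4 => -⌈R⌉) (fun _ => ⌈R⌉)) ?_
    intro x hx
    simp only [Set.mem_setOf_eq] at hx
    have hsum : ∑ j, ((x j : ℝ)) ^ 2 ≤ R ^ 2 := by
      have h0 : 0 ≤ ∑ j, ((x j : ℝ)) ^ 2 := Finset.sum_nonneg fun j _ => sq_nonneg _
      have hsq := Real.sq_sqrt h0
      have hx' : Real.sqrt (∑ j, ((x j : ℝ)) ^ 2) ≤ R := hx
      nlinarith [Real.sqrt_nonneg (∑ j, ((x j : ℝ)) ^ 2)]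
    have hceil : R ≤ (⌈R⌉ : ℝ) := Int.le_ceil R
    constructor <;> intro i <;>
    · have hsq : ((x i : ℝ)) ^ 2 ≤ R ^ 2 :=
        le_trans (Finset.single_le_sum (fun j _ => sq_nonneg ((x j : ℝ))) (Finset.mem_univ i)) hsum
      have : -(⌈R⌉ : ℝ) ≤ (x i : ℝ) ∧ (x i : ℝ) ≤ (⌈R⌉ : ℝ) := by constructor <;> nlinarith
      first
        | exact_mod_cast this.1
        | exact_mod_cast this.2
  · convert Set.finite_empty
    ext x
    simp only [Set.mem_setOf_eq, Set.mem_empty_iff_false, iff_false, not_le]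
    exact lt_of_lt_of_le hR (eNormZ_nonneg x)

noncomputable def NZ (R : ℝ) : ℕ := (finite_le R).toFinset.card

def cube (x : Fin 4 → ℤ) : Set E4 :=
  (MeasurableEquiv.toLp 2 (Fin 4 → ℝ)).symm ⁻¹' (Set.univ.pi fun i => Set.Ico (x i : ℝ) (x i + 1))

lemma mem_cube {x : Fin 4 → ℤ} {y : E4} :
    y ∈ cube x ↔ ∀ i, (x i : ℝ) ≤ y i ∧ y i < x i + 1 := by
  simp [cube, MeasurableEquiv.toLp_symm_apply, Set.mem_pi]

lemma measurable_cube (x : Fin 4 → ℤ) : MeasurableSet (cube x) :=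
  (MeasurableSet.univ_pi fun i => measurableSet_Ico).preimage (MeasurableEquiv.measurable _)

lemma volume_cube (x : Fin 4 → ℤ) : volume (cube x) = 1 := by
  rw [cube, (EuclideanSpace.volume_preserving_symm_measurableEquiv_toLp (Fin 4)).measure_preimage
    (MeasurableSet.univ_pi fun i => measurableSet_Ico).nullMeasurableSet, volume_pi_pi]
  simp [Real.volume_Ico]

lemma disjoint_cube {x x' : Fin 4 → ℤ} (h : x ≠ x') : Disjoint (cube x) (cube x') := by
  rw [Set.disjoint_left]
  intro y hy hy'
  rw [mem_cube] at hy hy'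
  apply h
  funext i
  have e1 : ⌊y i⌋ = x i := Int.floor_eq_iff.2 ⟨(hy i).1, by push_cast; exact (hy i).2⟩
  have e2 : ⌊y i⌋ = x' i := Int.floor_eq_iff.2 ⟨(hy' i).1, by push_cast; exact (hy' i).2⟩
  rw [← e1, e2]

lemma dist_emb_le {x : Fin 4 → ℤ} {y : E4} (h : ∀ i, ((x i : ℝ) - y i) ^ 2 ≤ 1) :
    dist (emb x) y ≤ 2 := by
  rw [EuclideanSpace.dist_eq]
  have h4 : ∑ i, dist (emb x i) (y i) ^ 2 ≤ 4 := by
    calc ∑ i, dist (emb x i) (y i) ^ 2 ≤ ∑ _i : Fin 4, (1:ℝ) := by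
          refine Finset.sum_le_sum fun i _ => ?_
          rw [Real.dist_eq, sq_abs]
          exact h i
    _ = 4 := by simp
  calc Real.sqrt (∑ i, dist (emb x i) (y i) ^ 2) ≤ Real.sqrt 4 := Real.sqrt_le_sqrt h4
  _ = 2 := by
      rw [show (4:ℝ) = 2 ^ 2 by norm_num, Real.sqrt_sq (by norm_num : (0:ℝ) ≤ 2)]

lemma cube_subset_ball {x : Fin 4 → ℤ} {R : ℝ} (hx : eNormZ x ≤ R) :
    cube x ⊆ Metric.closedBall (0 : E4) (R + 2) := by
  intro y hy
  rw [mem_cube] at hy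
  rw [Metric.mem_closedBall, dist_zero_right]
  have hd : dist (emb x) y ≤ 2 := by
    refine dist_emb_le fun i => ?_
    have := (hy i).1; have := (hy i).2
    nlinarith
  calc ‖y‖ = dist y 0 := by rw [dist_zero_right]
  _ ≤ dist y (emb x) + dist (emb x) 0 := dist_triangle _ _ _
  _ ≤ 2 + R := by
      rw [dist_comm y (emb x), dist_zero_right, ← eNormZ_eq_norm]
      exact add_le_add hd hx
  _ = R + 2 := by ring

lemma ball_subset_cubes {R : ℝ} :
    Metric.closedBall (0 : E4) R ⊆ ⋃ x ∈ (finite_le (R + 2)).toFinset, cube x := by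
  intro y hy
  rw [Metric.mem_closedBall, dist_zero_right] at hy
  set x : Fin 4 → ℤ := fun i => ⌊y i⌋ with hxdef
  have hyx : y ∈ cube x := by
    rw [mem_cube]
    intro i
    exact ⟨Int.floor_le _, by push_cast; exact Int.lt_floor_add_one _⟩
  have hd : dist (emb x) y ≤ 2 := by
    refine dist_emb_le fun i => ?_
    have h1 : (x i : ℝ) ≤ y i := Int.floor_le _
    have h2 : y i < x i + 1 := Int.lt_floor_add_one _
    nlinarith
  have hx : eNormZ x ≤ R + 2 := by
    rw [eNormZ_eq_norm]
    calc ‖emb x‖ = dist (emb x) 0 := by rw [dist_zero_right]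
    _ ≤ dist (emb x) y + dist y 0 := dist_triangle _ _ _
    _ ≤ 2 + R := by rw [dist_zero_right]; exact add_le_add hd hy
    _ = R + 2 := by ring
  exact Set.mem_biUnion ((finite_le (R + 2)).mem_toFinset.2 hx) hyx

lemma volume_closedBall_E4 (r : ℝ) (hr : 0 ≤ r) :
    volume (Metric.closedBall (0 : E4) r) = ENNReal.ofReal (Real.pi ^ 2 / 2 * r ^ 4) := by
  rw [EuclideanSpace.volume_closedBall]
  have hcard : Fintype.card (Fin 4) = 4 := Fintype.card_fin 4
  rw [hcard]
  have hgamma : Real.Gamma ((4:ℕ) / 2 + 1) = 2 := by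
    have : ((4:ℕ):ℝ) / 2 + 1 = (2:ℕ) + 1 := by norm_num
    rw [this, Real.Gamma_nat_eq_factorial]
    norm_num
  have hsqrt : Real.sqrt Real.pi ^ 4 = Real.pi ^ 2 := by
    have : Real.sqrt Real.pi ^ 4 = (Real.sqrt Real.pi ^ 2) ^ 2 := by ring
    rw [this, Real.sq_sqrt Real.pi_pos.le]
  rw [hgamma, hsqrt, ← ENNReal.ofReal_pow hr, ← ENNReal.ofReal_mul (by positivity)]
  congr 1
  ring

lemma volume_biUnion_cubes (s : Finset (Fin 4 → ℤ)) :
    volume (⋃ x ∈ s, cube x) = s.card := by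
  rw [measure_biUnion_finset ?_ fun x _ => measurable_cube x]
  · simp [volume_cube]
  · intro x _ x' _ h
    exact disjoint_cube h

lemma NZ_lower {R : ℝ} (hR : 0 ≤ R) : Real.pi ^ 2 / 2 * R ^ 4 ≤ NZ (R + 2) := by
  have h1 : volume (Metric.closedBall (0 : E4) R) ≤
      volume (⋃ x ∈ (finite_le (R + 2)).toFinset, cube x) :=
    measure_mono ball_subset_cubes
  rw [volume_closedBall_E4 R hR, volume_biUnion_cubes] at h1
  rw [← ENNReal.ofReal_natCast] at h1
  have := (ENNReal.ofReal_le_ofReal_iff (by positivity)).1 h1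
  exact this

lemma NZ_upper {R : ℝ} (hR : 0 ≤ R) : (NZ R : ℝ) ≤ Real.pi ^ 2 / 2 * (R + 2) ^ 4 := by
  have hsub : (⋃ x ∈ (finite_le R).toFinset, cube x) ⊆ Metric.closedBall (0 : E4) (R + 2) := by
    refine Set.iUnion₂_subset fun x hx => ?_
    exact cube_subset_ball (by simpa using hx)
  have h1 := measure_mono (μ := volume) hsub
  rw [volume_biUnion_cubes, volume_closedBall_E4 (R + 2) (by linarith)] at h1
  rw [← ENNReal.ofReal_natCast] at h1
  exact (ENNReal.ofReal_le_ofReal_iff (by positivity)).1 h1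

section AN
open Finset

lemma tendsto_comp_inv {g : ℝ → ℝ} (hg : ContinuousAt g 0) :
    Tendsto (fun x : ℝ => g x⁻¹) atTop (𝓝 (g 0)) :=
  hg.tendsto.comp tendsto_inv_atTop_zero

lemma abel_sum (a b : ℕ → ℝ) (ha0 : a 0 = 0) (N : ℕ) :
    ∑ k ∈ range N, (a (k + 1) - a k) * b (k + 1)
      = a N * b N + ∑ k ∈ range N, a k * (b k - b (k + 1)) := by
  have key : ∀ k, (a (k + 1) - a k) * b (k + 1)
      = (a (k + 1) * b (k + 1) - a k * b k) - a k * (b (k + 1) - b k) := by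
    intro k; ring
  calc ∑ k ∈ range N, (a (k + 1) - a k) * b (k + 1)
      = ∑ k ∈ range N, ((a (k + 1) * b (k + 1) - a k * b k) - a k * (b (k + 1) - b k)) :=
        Finset.sum_congr rfl fun k _ => key k
    _ = (∑ k ∈ range N, (a (k + 1) * b (k + 1) - a k * b k))
          - ∑ k ∈ range N, a k * (b (k + 1) - b k) := Finset.sum_sub_distrib _ _
    _ = (a N * b N - a 0 * b 0) - ∑ k ∈ range N, a k * (b (k + 1) - b k) := by
        rw [Finset.sum_range_sub (fun k => a k * b k)]
    _ = a N * b N + ∑ k ∈ range N, a k * (b k - b (k + 1)) := by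
        rw [ha0]
        have : ∑ k ∈ range N, a k * (b k - b (k + 1))
            = -∑ k ∈ range N, a k * (b (k + 1) - b k) := by
          rw [← Finset.sum_neg_distrib]
          exact Finset.sum_congr rfl fun k _ => by ring
        rw [this]
        ring

lemma harmonic_real (n : ℕ) :
    ((harmonic n : ℚ) : ℝ) = ∑ i ∈ range n, ((i : ℝ) + 1)⁻¹ := by
  rw [harmonic]
  push_cast
  rfl

lemma cesaro_log {u : ℕ → ℝ} {L : ℝ}
    (h : Tendsto (fun k : ℕ => ((k : ℝ) + 1) * u k) atTop (𝓝 L)) :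
    Tendsto (fun n : ℕ => (∑ k ∈ range n, u k) / Real.log n) atTop (𝓝 L) := by
  set H : ℕ → ℝ := fun n => ∑ i ∈ range n, ((i : ℝ) + 1)⁻¹ with hH_def
  have hH_sub_log : Tendsto (fun n : ℕ => H n - Real.log n) atTop
      (𝓝 Real.eulerMascheroniConstant) := by
    have := Real.tendsto_harmonic_sub_log
    refine this.congr fun n => ?_
    rw [harmonic_real]
  have hlog : Tendsto (fun n : ℕ => Real.log n) atTop atTop :=
    Real.tendsto_log_atTop.comp tendsto_natCast_atTop_atTop
  have hH_atTop : Tendsto H atTop atTop := by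
    have := hH_sub_log.add_atTop hlog
    refine this.congr fun n => by ring
  have hHlog : Tendsto (fun n : ℕ => H n / Real.log n) atTop (𝓝 1) := by
    have h0 : Tendsto (fun n : ℕ => (H n - Real.log n) / Real.log n) atTop (𝓝 0) :=
      hH_sub_log.div_atTop hlog
    have : Tendsto (fun n : ℕ => (H n - Real.log n) / Real.log n + 1) atTop (𝓝 (0 + 1)) :=
      h0.add tendsto_const_nhds
    rw [zero_add] at this
    refine this.congr' ?_
    filter_upwards [hlog.eventually_gt_atTop 0] with n hn
    field_simp
    ring
  -- the error terms
  have hv : (fun k : ℕ => u k - L * ((k : ℝ) + 1)⁻¹) =o[atTop] fun k : ℕ => ((k : ℝ) + 1)⁻¹ := by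
    have h0 : Tendsto (fun k : ℕ => ((k : ℝ) + 1) * u k - L) atTop (𝓝 0) := by
      simpa using h.sub_const L
    have ho : (fun k : ℕ => ((k : ℝ) + 1) * u k - L) =o[atTop] (fun _ : ℕ => (1 : ℝ)) :=
      (Asymptotics.isLittleO_one_iff ℝ).2 h0
    have := ho.mul_isBigO (Asymptotics.isBigO_refl (fun k : ℕ => ((k : ℝ) + 1)⁻¹) atTop)
    simp only [one_mul] at this
    refine this.congr' ?_ (by rfl)
    filter_upwards with k
    have hk : ((k : ℝ) + 1) ≠ 0 := by positivity
    field_simp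
  have hsum := hv.sum_range (fun i => by positivity) hH_atTop
  have hsum0 : Tendsto
      (fun n : ℕ => (∑ k ∈ range n, (u k - L * ((k : ℝ) + 1)⁻¹)) / H n) atTop (𝓝 0) :=
    hsum.tendsto_div_nhds_zero
  have key : Tendsto
      (fun n : ℕ => (∑ k ∈ range n, (u k - L * ((k : ℝ) + 1)⁻¹)) / H n * (H n / Real.log n)
        + L * (H n / Real.log n)) atTop (𝓝 (0 * 1 + L * 1)) :=
    ((hsum0.mul hHlog).add (hHlog.const_mul L))
  rw [zero_mul, zero_add, mul_one] at key
  refine key.congr' ?_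
  filter_upwards [hH_atTop.eventually_gt_atTop 0] with n hn
  have hHn : H n ≠ 0 := ne_of_gt hn
  have e1 : ∑ k ∈ range n, (u k - L * ((k : ℝ) + 1)⁻¹)
      = (∑ k ∈ range n, u k) - L * H n := by
    rw [Finset.sum_sub_distrib, ← Finset.mul_sum]
  rw [e1]
  rw [div_mul_div_comm, mul_comm (((∑ k ∈ range n, u k) - L * H n)) (H n),
    mul_div_mul_left _ _ hHn]
  field_simp
  ring

end AN

open Finset

noncomputable def aa (k : ℕ) : ℝ := (NZ k : ℝ) - 1

lemma eNormZ_zero : eNormZ 0 = 0 := by simp [eNormZ]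

lemma NZ_zero : NZ 0 = 1 := by
  unfold NZ
  rw [Finset.card_eq_one]
  refine ⟨0, ?_⟩
  ext x
  simp only [Set.Finite.mem_toFinset, Set.mem_setOf_eq, Finset.mem_singleton]
  constructor
  · intro hx
    by_contra hne
    exact absurd (le_trans (one_le_eNormZ hne) hx) (by norm_num)
  · rintro rfl
    simp [eNormZ_zero]

lemma aa_zero : aa 0 = 0 := by simp [aa, NZ_zero]

lemma tendsto_aa : Tendsto (fun k : ℕ => aa k * ((k : ℝ) ^ 4)⁻¹) atTop
    (𝓝 (Real.pi ^ 2 / 2)) := by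
  have hglcont : ContinuousAt (fun y : ℝ => Real.pi ^ 2 / 2 * (1 - 2 * y) ^ 4 - y ^ 4) 0 := by
    fun_prop
  have hgl : Tendsto (fun x : ℝ => (Real.pi ^ 2 / 2 * (x - 2) ^ 4 - 1) / x ^ 4) atTop
      (𝓝 (Real.pi ^ 2 / 2)) := by
    have := tendsto_comp_inv hglcont
    simp only [mul_zero, sub_zero, one_pow] at this
    norm_num at this
    refine this.congr' ?_
    filter_upwards [eventually_gt_atTop (0:ℝ)] with x hx
    have hx4 : x ^ 4 ≠ 0 := by positivity
    field_simp
  have hgucont : ContinuousAt (fun y : ℝ => Real.pi ^ 2 / 2 * (1 + 2 * y) ^ 4) 0 := by fun_prop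
  have hgu : Tendsto (fun x : ℝ => Real.pi ^ 2 / 2 * (x + 2) ^ 4 / x ^ 4) atTop
      (𝓝 (Real.pi ^ 2 / 2)) := by
    have := tendsto_comp_inv hgucont
    simp only [mul_zero, add_zero, one_pow] at this
    norm_num at this
    refine this.congr' ?_
    filter_upwards [eventually_gt_atTop (0:ℝ)] with x hx
    have hx4 : x ^ 4 ≠ 0 := by positivity
    field_simp
  refine tendsto_of_tendsto_of_tendsto_of_le_of_le'
    (hgl.comp tendsto_natCast_atTop_atTop) (hgu.comp tendsto_natCast_atTop_atTop) ?_ ?_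
  · filter_upwards [eventually_ge_atTop 2] with k hk
    have hk2 : (2:ℝ) ≤ (k:ℝ) := by exact_mod_cast hk
    have hlow := NZ_lower (R := (k:ℝ) - 2) (by linarith)
    rw [show (k:ℝ) - 2 + 2 = (k:ℝ) by ring] at hlow
    have hk4 : (0:ℝ) < (k:ℝ) ^ 4 := by positivity
    show (Real.pi ^ 2 / 2 * ((k:ℝ) - 2) ^ 4 - 1) / (k:ℝ) ^ 4 ≤ aa k * ((k : ℝ) ^ 4)⁻¹
    rw [div_eq_mul_inv]
    have : Real.pi ^ 2 / 2 * ((k:ℝ) - 2) ^ 4 - 1 ≤ aa k := by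
      unfold aa; linarith
    exact mul_le_mul_of_nonneg_right this (by positivity)
  · filter_upwards [eventually_ge_atTop 2] with k hk
    have hk2 : (2:ℝ) ≤ (k:ℝ) := by exact_mod_cast hk
    have hup := NZ_upper (R := (k:ℝ)) (by linarith)
    show aa k * ((k : ℝ) ^ 4)⁻¹ ≤ Real.pi ^ 2 / 2 * ((k:ℝ) + 2) ^ 4 / (k:ℝ) ^ 4
    rw [div_eq_mul_inv]
    have : aa k ≤ Real.pi ^ 2 / 2 * ((k:ℝ) + 2) ^ 4 := by
      unfold aa; linarith
    exact mul_le_mul_of_nonneg_right this (by positivity)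

noncomputable def Fn (N : ℕ) : Finset (Fin 4 → ℤ) := ((finite_le N).toFinset).erase 0

lemma mem_Fn {N : ℕ} {x : Fin 4 → ℤ} : x ∈ Fn N ↔ x ≠ 0 ∧ eNormZ x ≤ (N : ℝ) := by
  simp [Fn, Set.Finite.mem_toFinset]

lemma card_Fn (N : ℕ) : ((Fn N).card : ℝ) = aa N := by
  have h0 : (0 : Fin 4 → ℤ) ∈ (finite_le (N:ℝ)).toFinset := by
    simp [Set.Finite.mem_toFinset, eNormZ_zero, Nat.cast_nonneg]
  have h1 : 1 ≤ NZ (N:ℝ) := Finset.card_pos.2 ⟨0, h0⟩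
  unfold Fn aa
  rw [Finset.card_erase_of_mem h0]
  show ((NZ (N:ℝ) - 1 : ℕ) : ℝ) = _
  rw [Nat.cast_sub h1]
  norm_num

lemma Fn_subset {k l : ℕ} (h : k ≤ l) : Fn k ⊆ Fn l := by
  intro x hx
  rw [mem_Fn] at hx ⊢
  exact ⟨hx.1, le_trans hx.2 (by exact_mod_cast h)⟩

noncomputable def kap (x : Fin 4 → ℤ) : ℕ := (⌈eNormZ x⌉).toNat

lemma kap_eq_iff {x : Fin 4 → ℤ} (hx : x ≠ 0) {k : ℕ} (hk : 1 ≤ k) :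
    kap x = k ↔ ((k : ℝ) - 1 < eNormZ x ∧ eNormZ x ≤ (k : ℝ)) := by
  have h1 : kap x = k ↔ ⌈eNormZ x⌉ = (k : ℤ) := by
    unfold kap; omega
  rw [h1, Int.ceil_eq_iff]
  push_cast
  rfl

lemma one_le_kap {x : Fin 4 → ℤ} (hx : x ≠ 0) : 1 ≤ kap x := by
  have h : 0 < ⌈eNormZ x⌉ := Int.one_le_ceil_iff.2 (lt_of_lt_of_le one_pos (one_le_eNormZ hx))
  unfold kap; omega

lemma kap_le {x : Fin 4 → ℤ} {N : ℕ} (h : eNormZ x ≤ (N : ℝ)) : kap x ≤ N := by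
  have : ⌈eNormZ x⌉ ≤ (N : ℤ) := Int.ceil_le.2 (by exact_mod_cast h)
  unfold kap; omega

lemma fiber_eq {k N : ℕ} (hk : 1 ≤ k) (hkN : k ≤ N) :
    (Fn N).filter (fun x => kap x = k) = Fn k \ Fn (k - 1) := by
  ext x
  rw [Finset.mem_filter, Finset.mem_sdiff, mem_Fn, mem_Fn, mem_Fn]
  have hcast : ((k - 1 : ℕ) : ℝ) = (k : ℝ) - 1 := by
    rw [Nat.cast_sub hk]; norm_num
  constructor
  · rintro ⟨⟨hx0, _⟩, hkap⟩
    obtain ⟨hlt, hle⟩ := (kap_eq_iff hx0 hk).1 hkap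
    refine ⟨⟨hx0, hle⟩, ?_⟩
    rintro ⟨-, hle'⟩
    rw [hcast] at hle'
    linarith
  · rintro ⟨⟨hx0, hle⟩, hnot⟩
    have hlt : (k : ℝ) - 1 < eNormZ x := by
      by_contra hc
      push_neg at hc
      exact hnot ⟨hx0, by rw [hcast]; exact hc⟩
    have hN : eNormZ x ≤ (N : ℝ) := le_trans hle (by exact_mod_cast hkN)
    exact ⟨⟨hx0, hN⟩, (kap_eq_iff hx0 hk).2 ⟨hlt, hle⟩⟩

lemma card_fiber {k N : ℕ} (hk : 1 ≤ k) (hkN : k ≤ N) :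
    ((((Fn N).filter (fun x => kap x = k)).card : ℝ)) = aa k - aa (k - 1) := by
  rw [fiber_eq hk hkN, Finset.card_sdiff_of_subset (Fn_subset (Nat.sub_le k 1))]
  rw [Nat.cast_sub (Finset.card_le_card (Fn_subset (Nat.sub_le k 1)))]
  rw [card_Fn, card_Fn]

noncomputable def bb (k : ℕ) : ℝ := (((k : ℝ)) ^ 4)⁻¹
noncomputable def cc (k : ℕ) : ℝ := ((max ((k : ℝ) - 1) 1) ^ 4)⁻¹

noncomputable def SS (N : ℕ) : ℝ := ∑ x ∈ Fn N, (1 / eNormZ x ^ 4)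

lemma fiber_empty {N : ℕ} : (Fn N).filter (fun x => kap x = 0) = ∅ := by
  rw [Finset.filter_eq_empty_iff]
  intro x hx
  have := one_le_kap (mem_Fn.1 hx).1
  omega

lemma SS_bounds (N : ℕ) :
    (∑ k ∈ range (N + 1), (aa k - aa (k - 1)) * bb k) ≤ SS N ∧
      SS N ≤ ∑ k ∈ range (N + 1), (aa k - aa (k - 1)) * cc k := by
  have hdecomp : SS N = ∑ k ∈ range (N + 1),
      ∑ x ∈ (Fn N).filter (fun x => kap x = k), (1 / eNormZ x ^ 4) := by
    rw [Finset.sum_fiberwise_of_maps_to (fun x hx => Finset.mem_range.2 ?_)]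
    · rfl
    · exact Nat.lt_succ_of_le (kap_le (mem_Fn.1 hx).2)
  constructor
  · rw [hdecomp]
    refine Finset.sum_le_sum fun k hkmem => ?_
    rcases Nat.eq_zero_or_pos k with rfl | hk
    · simp [fiber_empty, aa_zero]
    · have hkN : k ≤ N := Nat.lt_succ_iff.1 (Finset.mem_range.1 hkmem)
      have hcard := card_fiber hk hkN
      have hbound : ∀ x ∈ (Fn N).filter (fun x => kap x = k), bb k ≤ 1 / eNormZ x ^ 4 := by
        intro x hx
        obtain ⟨hxF, hkap⟩ := Finset.mem_filter.1 hx
        obtain ⟨hx0, -⟩ := mem_Fn.1 hxF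
        obtain ⟨hlt, hle⟩ := (kap_eq_iff hx0 hk).1 hkap
        have hpos : 0 < eNormZ x := lt_of_lt_of_le one_pos (one_le_eNormZ hx0)
        unfold bb
        rw [one_div]
        gcongr
      calc (aa k - aa (k - 1)) * bb k
          = (((Fn N).filter (fun x => kap x = k)).card : ℝ) * bb k := by rw [hcard]
        _ ≤ ∑ x ∈ (Fn N).filter (fun x => kap x = k), (1 / eNormZ x ^ 4) := by
            have := Finset.card_nsmul_le_sum ((Fn N).filter (fun x => kap x = k))
              (fun x => 1 / eNormZ x ^ 4) (bb k) hbound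
            rwa [nsmul_eq_mul] at this
  · rw [hdecomp]
    refine Finset.sum_le_sum fun k hkmem => ?_
    rcases Nat.eq_zero_or_pos k with rfl | hk
    · simp [fiber_empty, aa_zero]
    · have hkN : k ≤ N := Nat.lt_succ_iff.1 (Finset.mem_range.1 hkmem)
      have hcard := card_fiber hk hkN
      have hbound : ∀ x ∈ (Fn N).filter (fun x => kap x = k), 1 / eNormZ x ^ 4 ≤ cc k := by
        intro x hx
        obtain ⟨hxF, hkap⟩ := Finset.mem_filter.1 hx
        obtain ⟨hx0, -⟩ := mem_Fn.1 hxF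
        obtain ⟨hlt, hle⟩ := (kap_eq_iff hx0 hk).1 hkap
        have hge : max ((k : ℝ) - 1) 1 ≤ eNormZ x := max_le hlt.le (one_le_eNormZ hx0)
        have hpos : (0:ℝ) < max ((k : ℝ) - 1) 1 := lt_of_lt_of_le one_pos (le_max_right _ _)
        unfold cc
        rw [one_div]
        gcongr
      calc ∑ x ∈ (Fn N).filter (fun x => kap x = k), (1 / eNormZ x ^ 4)
          ≤ (((Fn N).filter (fun x => kap x = k)).card : ℝ) * cc k := by
            have := Finset.sum_le_card_nsmul ((Fn N).filter (fun x => kap x = k))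
              (fun x => 1 / eNormZ x ^ 4) (cc k) hbound
            rwa [nsmul_eq_mul] at this
        _ = (aa k - aa (k - 1)) * cc k := by rw [hcard]

lemma habel_lo (N : ℕ) : ∑ k ∈ range (N + 1), (aa k - aa (k - 1)) * bb k
    = aa N * bb N + ∑ j ∈ range N, aa j * (bb j - bb (j + 1)) := by
  rw [Finset.sum_range_succ' (fun k => (aa k - aa (k - 1)) * bb k) N]
  simp only [Nat.add_sub_cancel, Nat.zero_sub, sub_self, zero_mul, add_zero]
  exact abel_sum aa bb aa_zero N

lemma habel_up (N : ℕ) : ∑ k ∈ range (N + 1), (aa k - aa (k - 1)) * cc k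
    = aa N * cc N + ∑ j ∈ range N, aa j * (cc j - cc (j + 1)) := by
  rw [Finset.sum_range_succ' (fun k => (aa k - aa (k - 1)) * cc k) N]
  simp only [Nat.add_sub_cancel, Nat.zero_sub, sub_self, zero_mul, add_zero]
  exact abel_sum aa cc aa_zero N

lemma hlog_nat : Tendsto (fun N : ℕ => Real.log N) atTop atTop :=
  Real.tendsto_log_atTop.comp tendsto_natCast_atTop_atTop

lemma hloginv : Tendsto (fun N : ℕ => (Real.log N)⁻¹) atTop (𝓝 0) :=
  hlog_nat.inv_tendsto_atTop

lemma hbbterm : Tendsto (fun N : ℕ => aa N * bb N * (Real.log N)⁻¹) atTop (𝓝 0) := by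
  have := tendsto_aa.mul hloginv
  rw [mul_zero] at this
  refine this.congr fun N => ?_
  simp [bb]

lemma hacc : Tendsto (fun N : ℕ => aa N * cc N) atTop (𝓝 (Real.pi ^ 2 / 2)) := by
  have hg3 : ContinuousAt (fun y : ℝ => (((1 - y) ^ 4)⁻¹ : ℝ)) 0 := by
    have : ContinuousAt (fun y : ℝ => ((1 - y) ^ 4 : ℝ)) 0 := by fun_prop
    exact this.inv₀ (by norm_num)
  have hchi : Tendsto (fun x : ℝ => x ^ 4 * (((x - 1) ^ 4)⁻¹ : ℝ)) atTop (𝓝 1) := by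
    have := tendsto_comp_inv hg3
    norm_num at this
    refine this.congr' ?_
    filter_upwards [eventually_gt_atTop (1:ℝ)] with x hx
    have hx0 : x ≠ 0 := by linarith
    have hx1 : x - 1 ≠ 0 := by intro h; apply hx.ne'; linarith
    field_simp
  have := tendsto_aa.mul (hchi.comp tendsto_natCast_atTop_atTop)
  rw [mul_one] at this
  refine this.congr' ?_
  filter_upwards [eventually_ge_atTop 2] with N hN
  have hN2 : (2:ℝ) ≤ (N:ℝ) := by exact_mod_cast hN
  have hmax : max ((N:ℝ) - 1) 1 = (N:ℝ) - 1 := max_eq_left (by linarith)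
  have hN0 : ((N:ℝ)) ^ 4 ≠ 0 := by positivity
  show aa N * ((N:ℝ) ^ 4)⁻¹ * ((N:ℝ) ^ 4 * (((N:ℝ) - 1) ^ 4)⁻¹) = aa N * cc N
  unfold cc
  rw [hmax]
  field_simp

lemma hccterm : Tendsto (fun N : ℕ => aa N * cc N * (Real.log N)⁻¹) atTop (𝓝 0) := by
  have := hacc.mul hloginv
  rwa [mul_zero] at this

lemma hu_lo : Tendsto (fun j : ℕ => ((j:ℝ) + 1) * (aa j * (bb j - bb (j + 1)))) atTop
    (𝓝 (2 * Real.pi ^ 2)) := by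
  have hgcont : ContinuousAt
      (fun y : ℝ => (4 + 6 * y + 4 * y ^ 2 + y ^ 3) / (1 + y) ^ 3) 0 := by
    apply ContinuousAt.div
    · fun_prop
    · fun_prop
    · norm_num
  have hPhi : Tendsto (fun x : ℝ => (x + 1) * (x ^ 4 * ((x ^ 4)⁻¹ - ((x + 1) ^ 4)⁻¹))) atTop
      (𝓝 4) := by
    have := tendsto_comp_inv hgcont
    norm_num at this
    refine this.congr' ?_
    filter_upwards [eventually_gt_atTop (0:ℝ)] with x hx
    have hx0 : x ≠ 0 := hx.ne'
    have hx1 : x + 1 ≠ 0 := by positivity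
    field_simp
    ring
  have := tendsto_aa.mul (hPhi.comp tendsto_natCast_atTop_atTop)
  have hlim : Real.pi ^ 2 / 2 * 4 = 2 * Real.pi ^ 2 := by ring
  rw [hlim] at this
  refine this.congr' ?_
  filter_upwards [eventually_ge_atTop 1] with j hj
  have hj1 : (1:ℝ) ≤ (j:ℝ) := by exact_mod_cast hj
  have hj0 : ((j:ℝ)) ^ 4 ≠ 0 := by positivity
  have hj10 : ((j:ℝ) + 1) ^ 4 ≠ 0 := by positivity
  show aa j * ((j:ℝ) ^ 4)⁻¹ * (((j:ℝ) + 1) * ((j:ℝ) ^ 4 * (((j:ℝ) ^ 4)⁻¹ - (((j:ℝ) + 1) ^ 4)⁻¹)))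
      = ((j:ℝ) + 1) * (aa j * (bb j - bb (j + 1)))
  unfold bb
  push_cast
  field_simp

lemma hu_up : Tendsto (fun j : ℕ => ((j:ℝ) + 1) * (aa j * (cc j - cc (j + 1)))) atTop
    (𝓝 (2 * Real.pi ^ 2)) := by
  have hgcont : ContinuousAt
      (fun y : ℝ => ((1 + y) * (4 - 6 * y + 4 * y ^ 2 - y ^ 3)) / (1 - y) ^ 4) 0 := by
    apply ContinuousAt.div
    · fun_prop
    · fun_prop
    · norm_num
  have hPsi : Tendsto (fun x : ℝ => (x + 1) * (x ^ 4 * (((x - 1) ^ 4)⁻¹ - (x ^ 4)⁻¹))) atTop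
      (𝓝 4) := by
    have := tendsto_comp_inv hgcont
    norm_num at this
    refine this.congr' ?_
    filter_upwards [eventually_gt_atTop (1:ℝ)] with x hx
    have hx0 : x ≠ 0 := by linarith
    have hx1 : x - 1 ≠ 0 := by intro h; apply hx.ne'; linarith
    field_simp
    ring
  have := tendsto_aa.mul (hPsi.comp tendsto_natCast_atTop_atTop)
  have hlim : Real.pi ^ 2 / 2 * 4 = 2 * Real.pi ^ 2 := by ring
  rw [hlim] at this
  refine this.congr' ?_
  filter_upwards [eventually_ge_atTop 2] with j hj
  have hj2 : (2:ℝ) ≤ (j:ℝ) := by exact_mod_cast hj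
  have hmax1 : max ((j:ℝ) - 1) 1 = (j:ℝ) - 1 := max_eq_left (by linarith)
  have hmax2 : max (((j:ℕ) + 1 : ℕ) : ℝ) 1 = (j:ℝ) + 1 := by
    push_cast
    exact max_eq_left (by linarith)
  have hj0 : ((j:ℝ)) ^ 4 ≠ 0 := by positivity
  have hjm0 : ((j:ℝ) - 1) ^ 4 ≠ 0 := by
    have : (j:ℝ) - 1 ≠ 0 := by intro h; nlinarith
    positivity
  show aa j * ((j:ℝ) ^ 4)⁻¹
        * (((j:ℝ) + 1) * ((j:ℝ) ^ 4 * ((((j:ℝ) - 1) ^ 4)⁻¹ - (((j:ℝ)) ^ 4)⁻¹)))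
      = ((j:ℝ) + 1) * (aa j * (cc j - cc (j + 1)))
  unfold cc
  rw [hmax1]
  have hmax2' : max (((j + 1 : ℕ) : ℝ) - 1) 1 = (j:ℝ) := by
    push_cast
    rw [show (j:ℝ) + 1 - 1 = (j:ℝ) by ring]
    exact max_eq_left (by linarith)
  rw [hmax2']
  field_simp

lemma hLo : Tendsto (fun N : ℕ =>
    (∑ k ∈ range (N + 1), (aa k - aa (k - 1)) * bb k) / Real.log N) atTop
    (𝓝 (2 * Real.pi ^ 2)) := by
  have hc := cesaro_log hu_lo
  have := hbbterm.add hc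
  rw [zero_add] at this
  refine this.congr fun N => ?_
  rw [habel_lo, add_div, div_eq_mul_inv (aa N * bb N)]

lemma hUp : Tendsto (fun N : ℕ =>
    (∑ k ∈ range (N + 1), (aa k - aa (k - 1)) * cc k) / Real.log N) atTop
    (𝓝 (2 * Real.pi ^ 2)) := by
  have hc := cesaro_log hu_up
  have := hccterm.add hc
  rw [zero_add] at this
  refine this.congr fun N => ?_
  rw [habel_up, add_div, div_eq_mul_inv (aa N * cc N)]

lemma tsum_eq_SS (N : ℕ) :
    (∑' x : Fin 4 → ℤ,
      Set.indicator {x : Fin 4 → ℤ | x ≠ 0 ∧ eNormZ x ≤ (N:ℝ)}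
        (fun x => 1 / eNormZ x ^ 4) x) = SS N := by
  rw [tsum_eq_sum
    (f := fun y : Fin 4 → ℤ => Set.indicator {x : Fin 4 → ℤ | x ≠ 0 ∧ eNormZ x ≤ (N:ℝ)}
      (fun x => 1 / eNormZ x ^ 4) y)
    (s := Fn N) (fun x hx => Set.indicator_of_notMem
      (show x ∉ {x : Fin 4 → ℤ | x ≠ 0 ∧ eNormZ x ≤ (N:ℝ)} from
        fun hmem => hx (mem_Fn.2 hmem)) _)]
  refine Finset.sum_congr rfl fun x hx => ?_
  exact Set.indicator_of_mem
    (show x ∈ {x : Fin 4 → ℤ | x ≠ 0 ∧ eNormZ x ≤ (N:ℝ)} from mem_Fn.1 hx) _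

theorem stmt12 :
    Tendsto (fun N : ℕ =>
        (1 / Real.log N) *
          ∑' x : Fin 4 → ℤ,
            Set.indicator {x : Fin 4 → ℤ | x ≠ 0 ∧ eNormZ x ≤ N}
              (fun x => 1 / eNormZ x ^ 4) x)
      atTop (𝓝 (2 * Real.pi ^ 2)) := by
  have key : Tendsto (fun N : ℕ => SS N / Real.log N) atTop (𝓝 (2 * Real.pi ^ 2)) := by
    refine tendsto_of_tendsto_of_tendsto_of_le_of_le' hLo hUp ?_ ?_
    · filter_upwards [eventually_ge_atTop 2] with N hN
      have h1 : (1:ℝ) < (N:ℝ) := by exact_mod_cast Nat.lt_of_lt_of_le Nat.one_lt_two hN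
      have hlogpos : 0 < Real.log N := Real.log_pos h1
      exact (div_le_div_iff_of_pos_right hlogpos).2 (SS_bounds N).1
    · filter_upwards [eventually_ge_atTop 2] with N hN
      have h1 : (1:ℝ) < (N:ℝ) := by exact_mod_cast Nat.lt_of_lt_of_le Nat.one_lt_two hN
      have hlogpos : 0 < Real.log N := Real.log_pos h1
      exact (div_le_div_iff_of_pos_right hlogpos).2 (SS_bounds N).2
  refine key.congr fun N => ?_
  rw [tsum_eq_SS N, one_div, inv_mul_eq_div]
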